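/- For every n × n matrix A with nonnegative real entries, sm(A) = (1/n)·inf over vectors y ∈ ℝⁿ with strictly positive entries of gm(Ay)/gm(y), where gm denotes the geometric mean of the entries of a vector. -/

import Mathlib

open scoped BigOperators Kronecker
open Matrix Filter Topology Pointwise

/-- The permanent of a square real matrix. -/
noncomputable def perm {ι : Type*} [Fintype ι] [DecidableEq ι] (A : Matrix ι ι ℝ) : ℝ :=
  ∑ σ : Equiv.Perm ι, ∏ i, A i (σ i)

/-- The permanental mean `pm A = (per A / n!) ^ (1/n)`. -/
noncomputable def pm {ι : Type*} [Fintype ι] [DecidableEq ι] (A : Matrix ι ι ℝ) : ℝ :=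
  (perm A / (Nat.factorial (Fintype.card ι) : ℝ)) ^ ((Fintype.card ι : ℝ)⁻¹)

/-- The geometric mean of the entries of a vector. -/
noncomputable def gmVec {ι : Type*} [Fintype ι] (v : ι → ℝ) : ℝ :=
  (∏ i, v i) ^ ((Fintype.card ι : ℝ)⁻¹)

/-- The set of values whose infimum defines the scaling mean. -/
noncomputable def smSet {ι κ : Type*} [Fintype ι] [Fintype κ] (A : Matrix ι κ ℝ) : Set ℝ :=
  {r : ℝ | ∃ x : ι → ℝ, ∃ y : κ → ℝ, (∀ i, 0 < x i) ∧ (∀ j, 0 < y j) ∧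
    r = (∑ i, ∑ j, x i * A i j * y j) / (gmVec x * gmVec y)}

/-- The scaling mean `sm A = (1/(mn)) · inf over positive vectors x, y of xᵀAy/(gm x · gm y)`. -/
noncomputable def sm {ι κ : Type*} [Fintype ι] [Fintype κ] (A : Matrix ι κ ℝ) : ℝ :=
  ((Fintype.card ι : ℝ) * (Fintype.card κ : ℝ))⁻¹ * sInf (smSet A)

lemma gmVec_pos {n : ℕ} {x : Fin n → ℝ} (hx : ∀ i, 0 < x i) : 0 < gmVec x :=
  Real.rpow_pos_of_pos (Finset.prod_pos fun i _ => hx i) _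

lemma gmVec_nonneg {n : ℕ} {x : Fin n → ℝ} (hx : ∀ i, 0 ≤ x i) : 0 ≤ gmVec x :=
  Real.rpow_nonneg (Finset.prod_nonneg fun i _ => hx i) _

lemma amgm {n : ℕ} (hn : 0 < n) {x v : Fin n → ℝ} (hx : ∀ i, 0 ≤ x i) (hv : ∀ i, 0 ≤ v i) :
    (n : ℝ) * (gmVec x * gmVec v) ≤ ∑ i, x i * v i := by
  have hn' : (n : ℝ) ≠ 0 := Nat.cast_ne_zero.mpr hn.ne'
  have h := Real.geom_mean_le_arith_mean_weighted Finset.univ (fun _ => (n : ℝ)⁻¹)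
    (fun i => x i * v i) (fun i _ => by positivity)
    (by simp [Finset.sum_const, Finset.card_univ]; field_simp)
    (fun i _ => mul_nonneg (hx i) (hv i))
  have h1 : (∏ i, (x i * v i) ^ ((n : ℝ)⁻¹)) = gmVec x * gmVec v := by
    rw [Real.finset_prod_rpow _ _ (fun i _ => mul_nonneg (hx i) (hv i))]
    rw [Finset.prod_mul_distrib]
    unfold gmVec
    rw [Real.mul_rpow (Finset.prod_nonneg fun i _ => hx i) (Finset.prod_nonneg fun i _ => hv i)]
    simp
  have h2 : ∑ i, (n : ℝ)⁻¹ * (x i * v i) = (n : ℝ)⁻¹ * ∑ i, x i * v i := by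
    rw [Finset.mul_sum]
  rw [h1, h2] at h
  calc (n : ℝ) * (gmVec x * gmVec v) ≤ (n : ℝ) * ((n : ℝ)⁻¹ * ∑ i, x i * v i) := by
        apply mul_le_mul_of_nonneg_left h (by positivity)
    _ = ∑ i, x i * v i := by field_simp

/-- Alternative characterization of the scaling mean:
`sm A = (1/n) · inf over positive y of gm(Ay)/gm(y)`. -/
theorem stmt_9 {n : ℕ} (A : Matrix (Fin n) (Fin n) ℝ) (hA : ∀ i j, 0 ≤ A i j) :
    sm A = (n : ℝ)⁻¹ *
      sInf {r : ℝ | ∃ y : Fin n → ℝ, (∀ j, 0 < y j) ∧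
        r = gmVec (A.mulVec y) / gmVec y} := by
  rcases Nat.eq_zero_or_pos n with hn | hn
  · subst hn
    simp [sm]
  have hn' : (n : ℝ) ≠ 0 := Nat.cast_ne_zero.mpr hn.ne'
  set S : Set ℝ := {r : ℝ | ∃ y : Fin n → ℝ, (∀ j, 0 < y j) ∧
    r = gmVec (A.mulVec y) / gmVec y} with hSdef
  have hmv : ∀ (y : Fin n → ℝ), (∀ j, 0 ≤ y j) → ∀ i, 0 ≤ A.mulVec y i := by
    intro y hy i
    simp only [Matrix.mulVec, dotProduct]
    exact Finset.sum_nonneg fun j _ => mul_nonneg (hA i j) (hy j)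
  have hS_ne : S.Nonempty := ⟨_, 1, fun _ => one_pos, rfl⟩
  have hS_bdd : BddBelow S := ⟨0, by
    rintro r ⟨y, hy, rfl⟩
    exact div_nonneg (gmVec_nonneg (hmv y fun j => (hy j).le)) (gmVec_pos hy).le⟩
  have hsum : ∀ (x y : Fin n → ℝ), (∑ i, ∑ j, x i * A i j * y j) = ∑ i, x i * A.mulVec y i := by
    intro x y
    simp [Matrix.mulVec, dotProduct, Finset.mul_sum, mul_assoc]
  have hsm_ne : (smSet A).Nonempty := ⟨_, 1, 1, fun _ => one_pos, fun _ => one_pos, rfl⟩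
  have hsm_bdd : BddBelow (smSet A) := ⟨0, by
    rintro r ⟨x, y, hx, hy, rfl⟩
    apply div_nonneg
    · exact Finset.sum_nonneg fun i _ => Finset.sum_nonneg fun j _ =>
        mul_nonneg (mul_nonneg (hx i).le (hA i j)) (hy j).le
    · exact (mul_pos (gmVec_pos hx) (gmVec_pos hy)).le⟩
  have key : sInf (smSet A) = (n : ℝ) * sInf S := by
    apply le_antisymm
    · rw [show (n : ℝ) * sInf S = sInf ((n : ℝ) • S) by
        rw [Real.sInf_smul_of_nonneg (by positivity) S, smul_eq_mul]]
      apply le_csInf (hS_ne.smul_set)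
      rintro b ⟨s, ⟨y, hy, rfl⟩, rfl⟩
      simp only [smul_eq_mul]
      set v := A.mulVec y with hvdef
      have hv0 : ∀ i, 0 ≤ v i := hmv y fun j => (hy j).le
      have hgy : 0 < gmVec y := gmVec_pos hy
      have step : ∀ δ ∈ Set.Ioi (0:ℝ), sInf (smSet A) ≤
          (n : ℝ) * ((∏ i, (v i + δ)) ^ ((n : ℝ)⁻¹) / gmVec y) := by
        intro δ hδ
        rw [Set.mem_Ioi] at hδ
        set x : Fin n → ℝ := fun i => (v i + δ)⁻¹ with hxdef
        have hvi : ∀ i, 0 < v i + δ := fun i => by have := hv0 i; linarith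
        have hx : ∀ i, 0 < x i := fun i => inv_pos.mpr (hvi i)
        have hP : 0 < ∏ i, (v i + δ) := Finset.prod_pos fun i _ => hvi i
        have hQ : 0 < (∏ i, (v i + δ)) ^ ((n : ℝ)⁻¹) := Real.rpow_pos_of_pos hP _
        have hmem : ((∑ i, ∑ j, x i * A i j * y j) / (gmVec x * gmVec y)) ∈ smSet A :=
          ⟨x, y, hx, hy, rfl⟩
        refine (csInf_le hsm_bdd hmem).trans ?_
        rw [hsum]
        have hxg : gmVec x = ((∏ i, (v i + δ)) ^ ((n : ℝ)⁻¹))⁻¹ := by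
          unfold gmVec
          rw [show (∏ i, x i) = (∏ i, (v i + δ))⁻¹ by
            rw [hxdef, ← Finset.prod_inv_distrib]]
          rw [Real.inv_rpow hP.le]
          simp
        have hsumle : (∑ i, x i * v i) ≤ (n : ℝ) := by
          calc (∑ i, x i * v i) ≤ ∑ _i : Fin n, (1 : ℝ) := by
                apply Finset.sum_le_sum
                intro i _
                rw [hxdef]
                calc (v i + δ)⁻¹ * v i ≤ (v i + δ)⁻¹ * (v i + δ) :=
                      mul_le_mul_of_nonneg_left (by linarith) (inv_pos.mpr (hvi i)).le
                  _ = 1 := inv_mul_cancel₀ (hvi i).ne'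
            _ = (n : ℝ) := by simp
        have hnum : 0 ≤ ∑ i, x i * v i :=
          Finset.sum_nonneg fun i _ => mul_nonneg (hx i).le (hv0 i)
        rw [hxg]
        rw [show (∑ i, x i * v i) / (((∏ i, (v i + δ)) ^ ((n : ℝ)⁻¹))⁻¹ * gmVec y)
            = (∑ i, x i * v i) * ((∏ i, (v i + δ)) ^ ((n : ℝ)⁻¹)) / gmVec y by
          field_simp]
        rw [show (n : ℝ) * ((∏ i, (v i + δ)) ^ ((n : ℝ)⁻¹) / gmVec y)
            = (n : ℝ) * ((∏ i, (v i + δ)) ^ ((n : ℝ)⁻¹)) / gmVec y by ring]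
        gcongr
      have htend : Tendsto (fun δ : ℝ => (n : ℝ) * ((∏ i, (v i + δ)) ^ ((n : ℝ)⁻¹) / gmVec y))
          (𝓝[>] (0:ℝ)) (𝓝 ((n : ℝ) * (gmVec v / gmVec y))) := by
        have c1 : ContinuousAt (fun δ : ℝ => ∏ i, (v i + δ)) 0 :=
          (continuous_finset_prod _ fun i _ => continuous_const.add continuous_id).continuousAt
        have c2 : ContinuousAt (fun δ : ℝ => (∏ i, (v i + δ)) ^ ((n : ℝ)⁻¹)) 0 :=
          c1.rpow_const (Or.inr (by positivity))
        have c3 := (c2.div_const (gmVec y)).const_mul (n : ℝ)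
        have h4 := c3.mono_left (nhdsWithin_le_nhds (s := Set.Ioi (0:ℝ)))
        convert h4 using 2
        unfold gmVec
        simp [Fintype.card_fin]
      exact ge_of_tendsto htend (eventually_nhdsWithin_of_forall step)
    · apply le_csInf hsm_ne
      rintro r ⟨x, y, hx, hy, rfl⟩
      have h1 : sInf S ≤ gmVec (A.mulVec y) / gmVec y := csInf_le hS_bdd ⟨y, hy, rfl⟩
      have hgx := gmVec_pos hx
      have hgy := gmVec_pos hy
      have hv0 : ∀ i, 0 ≤ A.mulVec y i := hmv y fun j => (hy j).le
      have h2 := amgm hn (fun i => (hx i).le) hv0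
      have hgv := gmVec_nonneg hv0
      rw [hsum]
      calc (n : ℝ) * sInf S ≤ (n : ℝ) * (gmVec (A.mulVec y) / gmVec y) :=
            mul_le_mul_of_nonneg_left h1 (by positivity)
        _ ≤ (∑ i, x i * A.mulVec y i) / (gmVec x * gmVec y) := by
            rw [le_div_iff₀ (by positivity)]
            calc (n : ℝ) * (gmVec (A.mulVec y) / gmVec y) * (gmVec x * gmVec y)
                = (n : ℝ) * (gmVec x * gmVec (A.mulVec y)) := by field_simp
              _ ≤ _ := h2
  rw [sm, key]
  simp only [Fintype.card_fin]
  field_simp
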